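/- Let θ be an admissible function, φ(p) = p θ(p), M > 0, and write β = β_{M,φ}. Fix T > 0. Then: (i) ∫₁^∞ ds / β(s) = ∞, so for every x > 0 there exists a unique f(x) > x with ∫_x^{f(x)} ds / β(s) = T; (ii) the function f is monotonically increasing on (0, ∞); and (iii) f(x) → 0 as x → 0⁺. -/

import Mathlib

open Set Filter Topology MeasureTheory

/-- `β_{M,φ}` for `φ(p) = p θ(p)`. -/
noncomputable def beta (p₀ M : ℝ) (θ : ℝ → ℝ) (x : ℝ) : ℝ :=
  sInf ((fun ε => M ^ ε * x ^ (1 - ε) * ((1 / ε) * θ (1 / ε))) '' Set.Ioc 0 (1 / p₀))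

section betaAux
variable {p₀ M : ℝ} {θ : ℝ → ℝ}

lemma coef_pos (hp₀ : 1 < p₀) (hθpos : ∀ p ≥ p₀, 0 < θ p) {ε : ℝ}
    (hε : ε ∈ Set.Ioc 0 (1 / p₀)) : 0 < (1 / ε) * θ (1 / ε) := by
  have h0 : (0:ℝ) < ε := hε.1
  have hp : p₀ ≤ 1 / ε := by
    have := one_div_le_one_div_of_le h0 hε.2
    rwa [one_div_one_div] at this
  have := hθpos _ hp
  positivity

lemma elem_pos (hp₀ : 1 < p₀) (hM : 0 < M) (hθpos : ∀ p ≥ p₀, 0 < θ p) {x : ℝ} (hx : 0 < x)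
    {ε : ℝ} (hε : ε ∈ Set.Ioc 0 (1 / p₀)) :
    0 < M ^ ε * x ^ (1 - ε) * ((1 / ε) * θ (1 / ε)) := by
  have h1 := coef_pos hp₀ hθpos hε
  have h2 : (0:ℝ) < M ^ ε := Real.rpow_pos_of_pos hM _
  have h3 : (0:ℝ) < x ^ (1 - ε) := Real.rpow_pos_of_pos hx _
  positivity

lemma Ioc_ne (hp₀ : 1 < p₀) : (Set.Ioc (0:ℝ) (1 / p₀)).Nonempty :=
  nonempty_Ioc.2 (by positivity)

lemma beta_bddBelow (hp₀ : 1 < p₀) (hM : 0 < M) (hθpos : ∀ p ≥ p₀, 0 < θ p) {x : ℝ}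
    (hx : 0 < x) :
    BddBelow ((fun ε => M ^ ε * x ^ (1 - ε) * ((1 / ε) * θ (1 / ε))) '' Set.Ioc 0 (1 / p₀)) :=
  ⟨0, by rintro b ⟨ε, hε, rfl⟩; exact (elem_pos hp₀ hM hθpos hx hε).le⟩

lemma beta_nonneg (hp₀ : 1 < p₀) (hM : 0 < M) (hθpos : ∀ p ≥ p₀, 0 < θ p) {x : ℝ}
    (hx : 0 < x) : 0 ≤ beta p₀ M θ x :=
  le_csInf ((Ioc_ne hp₀).image _) (by rintro b ⟨ε, hε, rfl⟩; exact (elem_pos hp₀ hM hθpos hx hε).le)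

lemma beta_le (hp₀ : 1 < p₀) (hM : 0 < M) (hθpos : ∀ p ≥ p₀, 0 < θ p) {x : ℝ} (hx : 0 < x)
    {ε : ℝ} (hε : ε ∈ Set.Ioc 0 (1 / p₀)) :
    beta p₀ M θ x ≤ M ^ ε * x ^ (1 - ε) * ((1 / ε) * θ (1 / ε)) :=
  csInf_le (beta_bddBelow hp₀ hM hθpos hx) (Set.mem_image_of_mem _ hε)

lemma beta_mono (hp₀ : 1 < p₀) (hM : 0 < M) (hθpos : ∀ p ≥ p₀, 0 < θ p) {x y : ℝ}
    (hx : 0 < x) (hxy : x ≤ y) : beta p₀ M θ x ≤ beta p₀ M θ y := by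
  refine le_csInf ((Ioc_ne hp₀).image _) ?_
  rintro b ⟨ε, hε, rfl⟩
  refine (beta_le hp₀ hM hθpos hx hε).trans ?_
  have h1 : x ^ (1 - ε) ≤ y ^ (1 - ε) := by
    apply Real.rpow_le_rpow hx.le hxy
    have h2 : ε ≤ 1 / p₀ := hε.2
    have h3 : 1 / p₀ < 1 := by
      rw [div_lt_one (by linarith)]; linarith
    linarith
  have h2 : (0:ℝ) < M ^ ε := Real.rpow_pos_of_pos hM _
  have h3 := coef_pos hp₀ hθpos hε
  show M ^ ε * x ^ (1 - ε) * ((1 / ε) * θ (1 / ε)) ≤ M ^ ε * y ^ (1 - ε) * ((1 / ε) * θ (1 / ε))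
  exact mul_le_mul_of_nonneg_right (mul_le_mul_of_nonneg_left h1 h2.le) h3.le

lemma beta_scale (hp₀ : 1 < p₀) (hM : 0 < M) (hθpos : ∀ p ≥ p₀, 0 < θ p) {x y : ℝ}
    (hx : 0 < x) (hy : 0 < y) :
    min (x / y) ((x / y) ^ (1 - 1 / p₀)) * beta p₀ M θ y ≤ beta p₀ M θ x := by
  set r := x / y with hr
  have hrpos : 0 < r := by positivity
  set m := min r (r ^ (1 - 1 / p₀)) with hm
  have hmpos : 0 < m := lt_min hrpos (Real.rpow_pos_of_pos hrpos _)
  refine le_csInf ((Ioc_ne hp₀).image _) ?_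
  rintro b ⟨ε, hε, rfl⟩
  have hrle : m ≤ r ^ (1 - ε) := by
    rcases le_total r 1 with h | h
    · calc m ≤ r := min_le_left _ _
        _ = r ^ (1:ℝ) := (Real.rpow_one r).symm
        _ ≤ r ^ (1 - ε) := Real.rpow_le_rpow_of_exponent_ge hrpos h (by linarith [hε.1])
    · calc m ≤ r ^ (1 - 1/p₀) := min_le_right _ _
        _ ≤ r ^ (1 - ε) := Real.rpow_le_rpow_of_exponent_le h (by linarith [hε.2])
  have hxry : x ^ (1 - ε) = r ^ (1 - ε) * y ^ (1 - ε) := by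
    rw [← Real.mul_rpow hrpos.le hy.le]
    rw [div_mul_cancel₀ _ hy.ne']
  have h2 : (0:ℝ) < M ^ ε := Real.rpow_pos_of_pos hM _
  have h3 := coef_pos hp₀ hθpos hε
  have h4 : (0:ℝ) < y ^ (1 - ε) := Real.rpow_pos_of_pos hy _
  have hby : beta p₀ M θ y ≤ M ^ ε * y ^ (1 - ε) * ((1 / ε) * θ (1 / ε)) :=
    beta_le hp₀ hM hθpos hy hε
  have : m * (M ^ ε * y ^ (1 - ε) * ((1 / ε) * θ (1 / ε)))
      ≤ M ^ ε * x ^ (1 - ε) * ((1 / ε) * θ (1 / ε)) := by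
    have hK := mul_le_mul_of_nonneg_right hrle
      (le_of_lt (by positivity : (0:ℝ) < M ^ ε * y ^ (1 - ε) * ((1 / ε) * θ (1 / ε))))
    rw [hxry]; nlinarith [hK]
  calc m * beta p₀ M θ y ≤ m * (M ^ ε * y ^ (1 - ε) * ((1 / ε) * θ (1 / ε))) :=
        mul_le_mul_of_nonneg_left hby hmpos.le
    _ ≤ _ := this

lemma beta_pos (hp₀ : 1 < p₀) (hM : 0 < M) (hθpos : ∀ p ≥ p₀, 0 < θ p)
    (htop : ∫⁻ s in Set.Ioo (0:ℝ) 1, ENNReal.ofReal (1 / beta p₀ M θ s) = ⊤)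
    {x : ℝ} (hx : 0 < x) : 0 < beta p₀ M θ x := by
  by_contra hle
  push_neg at hle
  have hzero : ∀ z : ℝ, 0 < z → beta p₀ M θ z = 0 := by
    intro z hz
    have hx0 : beta p₀ M θ x = 0 := le_antisymm hle (beta_nonneg hp₀ hM hθpos hx)
    have := beta_scale hp₀ hM hθpos hz hx
    rw [hx0, mul_zero] at this
    exact le_antisymm (by
      by_contra hzgt
      push_neg at hzgt
      -- need: beta z ≤ something * beta x = 0?  use scale other way
      have h2 := beta_scale hp₀ hM hθpos hx hz
      rw [hx0] at h2
      have hmpos : 0 < min (x / z) ((x / z) ^ (1 - 1/p₀)) :=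
        lt_min (by positivity) (Real.rpow_pos_of_pos (by positivity) _)
      nlinarith) (beta_nonneg hp₀ hM hθpos hz)
  have heq : ∫⁻ s in Set.Ioo (0:ℝ) 1, ENNReal.ofReal (1 / beta p₀ M θ s)
      = ∫⁻ s in Set.Ioo (0:ℝ) 1, (0:ENNReal) :=
    setLIntegral_congr_fun measurableSet_Ioo
      (fun s hs => by rw [hzero s hs.1, div_zero, ENNReal.ofReal_zero])
  rw [heq, lintegral_zero] at htop
  exact ENNReal.zero_ne_top htop

end betaAux

section rateAux
variable {g : ℝ → ℝ} {T : ℝ}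

lemma g_intInt (hg_anti : AntitoneOn g (Set.Ioi 0)) {a b : ℝ} (ha : 0 < a) (hb : 0 < b) :
    IntervalIntegrable g volume a b :=
  (hg_anti.mono (fun t ht => lt_of_lt_of_le (lt_min ha hb) ht.1)).intervalIntegrable

lemma integral_pos_g (hg_anti : AntitoneOn g (Set.Ioi 0)) (hg_pos : ∀ s > (0:ℝ), 0 < g s)
    {a b : ℝ} (ha : 0 < a) (hab : a < b) : 0 < ∫ s in a..b, g s :=
  intervalIntegral.intervalIntegral_pos_of_pos_on (g_intInt hg_anti ha (ha.trans hab))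
    (fun s hs => hg_pos s (ha.trans hs.1)) hab

lemma integral_nonneg_g (hg_pos : ∀ s > (0:ℝ), 0 < g s) {a b : ℝ} (ha : 0 < a) (hab : a ≤ b) :
    0 ≤ ∫ s in a..b, g s :=
  intervalIntegral.integral_nonneg hab (fun s hs => (hg_pos s (lt_of_lt_of_le ha hs.1)).le)

lemma integral_add_g (hg_anti : AntitoneOn g (Set.Ioi 0)) {a b c' : ℝ}
    (ha : 0 < a) (hb : 0 < b) (hc : 0 < c') :
    (∫ s in a..b, g s) + ∫ s in b..c', g s = ∫ s in a..c', g s :=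
  intervalIntegral.integral_add_adjacent_intervals (g_intInt hg_anti ha hb)
    (g_intInt hg_anti hb hc)

lemma exists_unique_rate (hg_anti : AntitoneOn g (Set.Ioi 0)) (hg_pos : ∀ s > (0:ℝ), 0 < g s)
    {e c : ℝ} (he : 0 < e) (he1 : e < 1) (hc : 0 < c)
    (hlb : ∀ s > (0:ℝ), c * s ^ (e - 1) ≤ g s) (hT : 0 < T) {x : ℝ} (hx : 0 < x) :
    ∃! y : ℝ, x < y ∧ (∫ s in x..y, g s) = T := by
  have htend : Tendsto (fun Y : ℝ => c * ((Y ^ e - x ^ e) / e)) atTop atTop := by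
    apply Tendsto.const_mul_atTop hc
    apply Tendsto.atTop_div_const he
    exact tendsto_atTop_add_const_right _ _ (tendsto_rpow_atTop he)
  obtain ⟨Y, hYT, hYx⟩ :=
    ((htend.eventually_ge_atTop T).and (eventually_ge_atTop (x + 1))).exists
  have hxY : x < Y := by linarith
  have hY : 0 < Y := by linarith
  have hcont_pow : ContinuousOn (fun s : ℝ => c * s ^ (e - 1)) (Set.uIcc x Y) := by
    apply continuousOn_const.mul
    apply ContinuousOn.rpow_const continuousOn_id
    intro s hs
    left
    have : 0 < s := lt_of_lt_of_le (lt_min hx hY) hs.1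
    exact this.ne'
  have hGY : T ≤ ∫ s in x..Y, g s := by
    refine hYT.trans ?_
    have h1 : (∫ s in x..Y, c * s ^ (e - 1)) = c * ((Y ^ e - x ^ e) / e) := by
      rw [intervalIntegral.integral_const_mul, integral_rpow (Or.inl (by linarith))]
      norm_num
    rw [← h1]
    refine intervalIntegral.integral_mono_on hxY.le (hcont_pow.intervalIntegrable)
      (g_intInt hg_anti hx hY) (fun s hs => hlb s (lt_of_lt_of_le hx hs.1))
  have hcont : ContinuousOn (fun y => ∫ s in x..y, g s) (Set.Icc x Y) := by
    have := intervalIntegral.continuousOn_primitive_interval'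
      (g_intInt hg_anti hx hY) left_mem_uIcc
    rwa [uIcc_of_le hxY.le] at this
  have hmem : T ∈ Set.Icc ((fun y => ∫ s in x..y, g s) x) ((fun y => ∫ s in x..y, g s) Y) := by
    constructor
    · simp [intervalIntegral.integral_same, hT.le]
    · simpa using hGY
  obtain ⟨y, hyIcc, hGy⟩ := intermediate_value_Icc hxY.le hcont hmem
  dsimp only at hGy
  have hxy : x < y := by
    rcases eq_or_lt_of_le hyIcc.1 with h | h
    · exfalso
      rw [← h] at hGy
      simp only [intervalIntegral.integral_same] at hGy
      exact hT.ne hGy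
    · exact h
  refine ⟨y, ⟨hxy, hGy⟩, ?_⟩
  rintro z ⟨hxz, hGz⟩
  by_contra hne
  rcases lt_or_gt_of_ne hne with h | h
  · have hpos := integral_pos_g hg_anti hg_pos (hx.trans hxz) h
    have hadd := integral_add_g hg_anti hx (hx.trans hxz) (hx.trans hxy)
    rw [hGz, hGy] at hadd
    linarith
  · have hpos := integral_pos_g hg_anti hg_pos (hx.trans hxy) h
    have hadd := integral_add_g hg_anti hx (hx.trans hxy) (hx.trans hxz)
    rw [hGz, hGy] at hadd
    linarith

lemma rate_mono (hg_anti : AntitoneOn g (Set.Ioi 0)) (hg_pos : ∀ s > (0:ℝ), 0 < g s)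
    {F : ℝ → ℝ} (hF : ∀ x > (0:ℝ), x < F x ∧ (∫ s in x..(F x), g s) = T) :
    MonotoneOn F (Set.Ioi 0) := by
  intro x₁ h₁ x₂ h₂ h12
  simp only [Set.mem_Ioi] at h₁ h₂
  by_contra hlt
  push_neg at hlt
  obtain ⟨hx₁F, hT₁⟩ := hF x₁ h₁
  obtain ⟨hx₂F, hT₂⟩ := hF x₂ h₂
  have hF₂ : 0 < F x₂ := h₂.trans hx₂F
  have hF₁ : 0 < F x₁ := h₁.trans hx₁F
  have h1 : (∫ s in x₂..(F x₂), g s) + ∫ s in (F x₂)..(F x₁), g s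
      = ∫ s in x₂..(F x₁), g s := integral_add_g hg_anti h₂ hF₂ hF₁
  have hpos1 : 0 < ∫ s in (F x₂)..(F x₁), g s := integral_pos_g hg_anti hg_pos hF₂ hlt
  have h2 : (∫ s in x₁..x₂, g s) + ∫ s in x₂..(F x₁), g s
      = ∫ s in x₁..(F x₁), g s := integral_add_g hg_anti h₁ h₂ hF₁
  have hnn : 0 ≤ ∫ s in x₁..x₂, g s := integral_nonneg_g hg_pos h₁ h12
  rw [hT₂] at h1
  rw [hT₁] at h2
  linarith

lemma rate_tendsto (hg_anti : AntitoneOn g (Set.Ioi 0)) (hg_pos : ∀ s > (0:ℝ), 0 < g s)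
    (hT : 0 < T)
    (hK : ∀ δ ∈ Set.Ioo (0:ℝ) 1, ∃ x₀ ∈ Set.Ioo (0:ℝ) δ, T < ∫ s in x₀..δ, g s)
    {F : ℝ → ℝ} (hF : ∀ x > (0:ℝ), x < F x ∧ (∫ s in x..(F x), g s) = T) :
    Tendsto F (𝓝[>] 0) (𝓝 0) := by
  rw [tendsto_order]
  constructor
  · intro a ha
    filter_upwards [self_mem_nhdsWithin] with x hx
    have h1 := (hF x hx).1
    have hx' : (0:ℝ) < x := hx
    linarith
  · intro a ha
    have hδ0 : 0 < min (a / 2) (1 / 2) := lt_min (by linarith) one_half_pos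
    have hδ1 : min (a / 2) (1 / 2) < 1 := lt_of_le_of_lt (min_le_right _ _) (by norm_num)
    obtain ⟨x₀, hx₀, hx₀T⟩ := hK _ ⟨hδ0, hδ1⟩
    filter_upwards [Ioo_mem_nhdsGT_of_mem ⟨le_refl (0:ℝ), hx₀.1⟩] with x hx
    by_contra hge
    push_neg at hge
    set δ := min (a / 2) (1 / 2) with hδdef
    have hδa : δ < a := lt_of_le_of_lt (min_le_left _ _) (by linarith)
    have hδF : δ ≤ F x := by linarith
    obtain ⟨hxF, hTx⟩ := hF x hx.1
    have hFx : 0 < F x := hx.1.trans hxF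
    have h1 : (∫ s in x..δ, g s) + ∫ s in δ..(F x), g s = ∫ s in x..(F x), g s :=
      integral_add_g hg_anti hx.1 hδ0 hFx
    have h2 : (∫ s in x..x₀, g s) + ∫ s in x₀..δ, g s = ∫ s in x..δ, g s :=
      integral_add_g hg_anti hx.1 hx₀.1 hδ0
    have h3 : 0 ≤ ∫ s in x..x₀, g s := integral_nonneg_g hg_pos hx.1 hx.2.le
    have h4 : 0 ≤ ∫ s in δ..(F x), g s := integral_nonneg_g hg_pos hδ0 hδF
    rw [hTx] at h1
    linarith

lemma claimK (hg_anti : AntitoneOn g (Set.Ioi 0)) (hg_pos : ∀ s > (0:ℝ), 0 < g s)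
    (htop : ∫⁻ s in Set.Ioo (0:ℝ) 1, ENNReal.ofReal (g s) = ⊤) (T : ℝ) :
    ∀ δ ∈ Set.Ioo (0:ℝ) 1, ∃ x₀ ∈ Set.Ioo (0:ℝ) δ, T < ∫ s in x₀..δ, g s := by
  intro δ hδ
  by_contra hcon
  push_neg at hcon
  -- the tail over [δ,1) has finite mass
  have hfin : ∫⁻ s in Set.Ico δ 1, ENNReal.ofReal (g s) < ⊤ := by
    calc ∫⁻ s in Set.Ico δ 1, ENNReal.ofReal (g s)
        ≤ ∫⁻ _ in Set.Ico δ 1, ENNReal.ofReal (g δ) := by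
          apply lintegral_mono_ae
          filter_upwards [ae_restrict_mem measurableSet_Ico] with s hs
          exact ENNReal.ofReal_le_ofReal (hg_anti hδ.1 (hδ.1.trans_le hs.1) hs.1)
      _ = ENNReal.ofReal (g δ) * volume (Set.Ico δ 1) := setLIntegral_const _ _
      _ < ⊤ := by
          apply ENNReal.mul_lt_top ENNReal.ofReal_lt_top
          rw [Real.volume_Ico]
          exact ENNReal.ofReal_lt_top
  have hsub : Set.Ioo (0:ℝ) 1 ⊆ Set.Ioo 0 δ ∪ Set.Ico δ 1 := by
    intro s hs
    rcases lt_or_ge s δ with h | h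
    · exact Or.inl ⟨hs.1, h⟩
    · exact Or.inr ⟨h, hs.2⟩
  have htopδ : ∫⁻ s in Set.Ioo (0:ℝ) δ, ENNReal.ofReal (g s) = ⊤ := by
    by_contra hne
    have hmono : (∫⁻ s in Set.Ioo (0:ℝ) 1, ENNReal.ofReal (g s))
        ≤ ∫⁻ s in (Set.Ioo (0:ℝ) δ ∪ Set.Ico δ 1), ENNReal.ofReal (g s) :=
      lintegral_mono_set hsub
    have hunion := lintegral_union_le (μ := volume) (fun s => ENNReal.ofReal (g s))
      (Set.Ioo (0:ℝ) δ) (Set.Ico δ 1)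
    have h1 := hmono.trans hunion
    rw [htop] at h1
    have h2 : (∫⁻ s in Set.Ioo (0:ℝ) δ, ENNReal.ofReal (g s))
        + ∫⁻ s in Set.Ico δ 1, ENNReal.ofReal (g s) < ⊤ :=
      ENNReal.add_lt_top.2 ⟨lt_top_iff_ne_top.2 hne, hfin⟩
    exact absurd (lt_of_le_of_lt h1 h2) (lt_irrefl _)
  -- the increasing truncations
  set f : ℝ → ENNReal := fun s => ENNReal.ofReal (g s) with hf
  set u : ℕ → ℝ := fun n => δ / (n + 2) with hu
  have hu_pos : ∀ n, 0 < u n := fun n => div_pos hδ.1 (by positivity)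
  have hu_lt : ∀ n, u n < δ := by
    intro n
    rw [hu]
    rw [div_lt_iff₀ (by positivity)]
    nlinarith [hδ.1]
  have hS_mono : Monotone fun n => Set.Ioc (u n) δ := by
    intro n m hnm
    apply Set.Ioc_subset_Ioc_left
    have hcast : ((n:ℝ) + 2) ≤ (m:ℝ) + 2 := by
      have : (n:ℝ) ≤ (m:ℝ) := Nat.cast_le.2 hnm
      linarith
    exact div_le_div_of_nonneg_left hδ.1.le (by positivity) hcast
  have hmeasn : ∀ n, AEMeasurable f (volume.restrict (Set.Ioc (u n) δ)) := fun n =>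
    ENNReal.measurable_ofReal.comp_aemeasurable
      (aemeasurable_restrict_of_antitoneOn measurableSet_Ioc
        (hg_anti.mono (fun t ht => (hu_pos n).trans ht.1)))
  have hu_tendsto : Tendsto u atTop (𝓝 0) := by
    rw [hu]
    apply Tendsto.div_atTop tendsto_const_nhds
    apply tendsto_atTop_add_const_right
    exact tendsto_natCast_atTop_atTop
  have hpt : ∀ x, (Set.Ioc (0:ℝ) δ).indicator f x
      = ⨆ n, (Set.Ioc (u n) δ).indicator f x := by
    intro x
    by_cases hx : x ∈ Set.Ioc (0:ℝ) δ
    · rw [Set.indicator_of_mem hx]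
      apply le_antisymm
      · obtain ⟨n, hn⟩ := (hu_tendsto.eventually_lt_const hx.1).exists
        refine le_iSup_of_le n ?_
        rw [Set.indicator_of_mem (show x ∈ Set.Ioc (u n) δ from ⟨hn, hx.2⟩)]
      · exact iSup_le fun n => (Set.indicator_le_self' (fun _ _ => zero_le) x)
    · rw [Set.indicator_of_notMem hx]
      symm
      rw [ENNReal.iSup_eq_zero]
      intro n
      rw [Set.indicator_of_notMem]
      intro hmem
      exact hx (Set.Ioc_subset_Ioc_left (hu_pos n).le hmem)
  have key : ∫⁻ s in Set.Ioc (0:ℝ) δ, f s = ⨆ n, ∫⁻ s in Set.Ioc (u n) δ, f s := by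
    calc ∫⁻ s in Set.Ioc (0:ℝ) δ, f s
        = ∫⁻ x, (Set.Ioc (0:ℝ) δ).indicator f x := (lintegral_indicator measurableSet_Ioc _).symm
      _ = ∫⁻ x, ⨆ n, (Set.Ioc (u n) δ).indicator f x := by
          apply lintegral_congr
          exact hpt
      _ = ⨆ n, ∫⁻ x, (Set.Ioc (u n) δ).indicator f x := by
          apply lintegral_iSup'
          · exact fun n => (aemeasurable_indicator_iff measurableSet_Ioc).2 (hmeasn n)
          · refine ae_of_all _ fun x n m hnm => ?_
            exact Set.indicator_le_indicator_of_subset (hS_mono hnm) (fun _ => zero_le) x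
      _ = ⨆ n, ∫⁻ s in Set.Ioc (u n) δ, f s := by
          simp_rw [lintegral_indicator measurableSet_Ioc]
  have hboundn : ∀ n, ∫⁻ s in Set.Ioc (u n) δ, f s ≤ ENNReal.ofReal T := by
    intro n
    have hint : IntegrableOn g (Set.Ioc (u n) δ) := by
      have h := g_intInt hg_anti (hu_pos n) hδ.1
      rwa [intervalIntegrable_iff_integrableOn_Ioc_of_le (hu_lt n).le] at h
    have hnn : 0 ≤ᵐ[volume.restrict (Set.Ioc (u n) δ)] g :=
      (ae_restrict_iff' measurableSet_Ioc).2
        (ae_of_all _ fun s hs => (hg_pos s ((hu_pos n).trans hs.1)).le)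
    calc ∫⁻ s in Set.Ioc (u n) δ, f s
        = ENNReal.ofReal (∫ s in Set.Ioc (u n) δ, g s) :=
          (ofReal_integral_eq_lintegral_ofReal hint hnn).symm
      _ ≤ ENNReal.ofReal T := by
          apply ENNReal.ofReal_le_ofReal
          rw [← intervalIntegral.integral_of_le (hu_lt n).le]
          exact hcon (u n) ⟨hu_pos n, hu_lt n⟩
  have hle : ∫⁻ s in Set.Ioc (0:ℝ) δ, f s ≤ ENNReal.ofReal T := by
    rw [key]
    exact iSup_le hboundn
  have : (⊤ : ENNReal) ≤ ENNReal.ofReal T := by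
    rw [← htopδ]
    exact (lintegral_mono_set Set.Ioo_subset_Ioc_self).trans hle
  exact absurd (lt_of_le_of_lt this ENNReal.ofReal_lt_top) (lt_irrefl _)

lemma lint_Ioi_top {e c : ℝ} (he : 0 < e) (hc : 0 < c)
    (hlb : ∀ s > (0:ℝ), c * s ^ (e - 1) ≤ g s) :
    ∫⁻ s in Set.Ioi (1:ℝ), ENNReal.ofReal (g s) = ⊤ := by
  have hcontOn : ContinuousOn (fun s : ℝ => c * s ^ (e - 1)) (Set.Ioi 1) := by
    apply continuousOn_const.mul
    apply ContinuousOn.rpow_const continuousOn_id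
    intro s hs
    left
    exact (lt_trans one_pos hs).ne'
  have hnn : 0 ≤ᵐ[volume.restrict (Set.Ioi (1:ℝ))] fun s : ℝ => c * s ^ (e - 1) :=
    (ae_restrict_iff' measurableSet_Ioi).2 (ae_of_all _ fun s hs => by
      have h1 : (0:ℝ) < s := lt_trans one_pos hs
      positivity)
  have h1 : ∫⁻ s in Set.Ioi (1:ℝ), ENNReal.ofReal (c * s ^ (e - 1)) = ⊤ := by
    by_contra hne
    have hint : Integrable (fun s : ℝ => c * s ^ (e - 1)) (volume.restrict (Set.Ioi 1)) :=
      (lintegral_ofReal_ne_top_iff_integrable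
        (hcontOn.aestronglyMeasurable measurableSet_Ioi) hnn).1 hne
    have h2 : IntegrableOn (fun s : ℝ => s ^ (e - 1)) (Set.Ioi 1) := by
      have h3 := hint.const_mul c⁻¹
      have h4 : Integrable (fun s : ℝ => s ^ (e - 1)) (volume.restrict (Set.Ioi 1)) := by
        simpa [← mul_assoc, inv_mul_cancel₀ hc.ne'] using h3
      exact h4
    rw [integrableOn_Ioi_rpow_iff zero_lt_one] at h2
    linarith
  refine eq_top_mono ?_ h1
  apply lintegral_mono_ae
  filter_upwards [ae_restrict_mem measurableSet_Ioi] with s hs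
  exact ENNReal.ofReal_le_ofReal (hlb s (lt_trans one_pos hs))

end rateAux

/-- For `θ` admissible, `φ(p) = p θ(p)`, `M > 0`, `β = β_{M,φ}` and `T > 0`:
(i) `∫₁^∞ ds/β(s) = ∞`, so for every `x > 0` there is a unique `f(x) > x` with
`∫_x^{f(x)} ds/β(s) = T`; (ii) any such rate function `f` is monotonically increasing on
`(0, ∞)`; and (iii) `f(x) → 0` as `x → 0⁺`. -/
theorem stmt_14 (p₀ : ℝ) (hp₀ : 1 < p₀) (θ : ℝ → ℝ)
    (hθc : ContinuousOn θ (Ici p₀)) (hθpos : ∀ p ≥ p₀, 0 < θ p)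
    (hadm : ∀ M' > 0,
      ∫⁻ s in Ioo (0:ℝ) 1, ENNReal.ofReal (1 / beta p₀ M' θ s) = ⊤)
    (M : ℝ) (hM : 0 < M) (T : ℝ) (hT : 0 < T) :
    (∫⁻ s in Ioi (1:ℝ), ENNReal.ofReal (1 / beta p₀ M θ s) = ⊤) ∧
    (∀ x > 0, ∃! y : ℝ, x < y ∧ (∫ s in x..y, 1 / beta p₀ M θ s) = T) ∧
    (∀ F : ℝ → ℝ,
      (∀ x > 0, x < F x ∧ (∫ s in x..(F x), 1 / beta p₀ M θ s) = T) →
      MonotoneOn F (Ioi 0) ∧ Tendsto F (𝓝[>] 0) (𝓝 0)) := by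
  have htopM := hadm M hM
  set g : ℝ → ℝ := fun s => 1 / beta p₀ M θ s with hgdef
  have hbpos : ∀ x : ℝ, 0 < x → 0 < beta p₀ M θ x :=
    fun x hx => beta_pos hp₀ hM hθpos htopM hx
  have hg_pos : ∀ s > (0:ℝ), 0 < g s := fun s hs => by
    simp only [hgdef]
    exact div_pos one_pos (hbpos s hs)
  have hg_anti : AntitoneOn g (Set.Ioi 0) := by
    intro a ha b hb hab
    exact one_div_le_one_div_of_le (hbpos a ha) (beta_mono hp₀ hM hθpos ha hab)
  have hp₀pos : (0:ℝ) < p₀ := lt_trans one_pos hp₀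
  have he : 0 < 1 / p₀ := by positivity
  have he1 : 1 / p₀ < 1 := by rw [div_lt_one hp₀pos]; exact hp₀
  have hεmem : 1 / p₀ ∈ Set.Ioc (0:ℝ) (1 / p₀) := ⟨he, le_refl _⟩
  have hθp₀ := hθpos p₀ (le_refl _)
  have hMe : (0:ℝ) < M ^ (1/p₀) := Real.rpow_pos_of_pos hM _
  have hK : (0:ℝ) < p₀ * θ p₀ := by positivity
  have hMK : (0:ℝ) < M ^ (1/p₀) * (p₀ * θ p₀) := mul_pos hMe hK
  have hc : (0:ℝ) < 1 / (M ^ (1/p₀) * (p₀ * θ p₀)) := by positivity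
  have hlb : ∀ s > (0:ℝ),
      (1 / (M ^ (1/p₀) * (p₀ * θ p₀))) * s ^ (1/p₀ - 1) ≤ g s := by
    intro s hs
    have hb := beta_le hp₀ hM hθpos hs hεmem
    rw [one_div_one_div] at hb
    have hse : (0:ℝ) < s ^ (1 - 1/p₀) := Real.rpow_pos_of_pos hs _
    have hBpos : (0:ℝ) < M ^ (1/p₀) * s ^ (1 - 1/p₀) * (p₀ * θ p₀) := by positivity
    have h2 : 1 / (M ^ (1/p₀) * s ^ (1 - 1/p₀) * (p₀ * θ p₀)) ≤ g s :=
      one_div_le_one_div_of_le (hbpos s hs) hb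
    refine le_trans (le_of_eq ?_) h2
    have hmul : s ^ (1 - 1/p₀) * s ^ (1/p₀ - 1) = 1 := by
      rw [← Real.rpow_add hs]
      norm_num
    rw [eq_div_iff hBpos.ne']
    calc (1 / (M ^ (1/p₀) * (p₀ * θ p₀))) * s ^ (1/p₀ - 1)
          * (M ^ (1/p₀) * s ^ (1 - 1/p₀) * (p₀ * θ p₀))
        = (1 / (M ^ (1/p₀) * (p₀ * θ p₀)) * (M ^ (1/p₀) * (p₀ * θ p₀)))
          * (s ^ (1 - 1/p₀) * s ^ (1/p₀ - 1)) := by ring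
      _ = 1 := by rw [hmul, one_div_mul_cancel hMK.ne', one_mul]
  refine ⟨lint_Ioi_top he hc hlb, ?_, ?_⟩
  · intro x hx
    exact exists_unique_rate hg_anti hg_pos he he1 hc hlb hT hx
  · intro F hF
    exact ⟨rate_mono hg_anti hg_pos hF,
      rate_tendsto hg_anti hg_pos hT (claimK hg_anti hg_pos htopM T) hF⟩
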